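/- Let I ⊂ K[x_0,…,x_n] be a Borel-fixed ideal whose quotient has constant Hilbert polynomial d (d points in ℙⁿ), generated in degree d, and let reg denote the regularity of its saturation. Then exactly d − reg consecutive DegLex-rational deformations (each replacing the DegLex-minimal minimal monomial x_1^{reg} x_0^{d−reg} of the Borel set {I_d} by the DegLex-maximal monomial of the complement involving a variable of index ≥ 2, which increases the regularity by exactly 1) lead from I to the lexsegment ideal L = (x_n,…,x_2, x_1^d)_{≥ d}. -/

import Mathlib

open Finset

/-- Elementary decreasing move `e⁻_i` : replace one factor `x_i` by `x_{i-1}`. -/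
def downAt (i : ℕ) (α : ℕ → ℕ) : ℕ → ℕ :=
  fun k => if k = i then α i - 1 else if k = i - 1 then α (i - 1) + 1 else α k

/-- Elementary increasing move `e⁺_i` : replace one factor `x_i` by `x_{i+1}`. -/
def upAt (i : ℕ) (α : ℕ → ℕ) : ℕ → ℕ :=
  fun k => if k = i then α i - 1 else if k = i + 1 then α (i + 1) + 1 else α k

/-- `β` is obtained from `α` by one admissible decreasing move. -/
def DownStep (n : ℕ) (α β : ℕ → ℕ) : Prop :=
  ∃ i, 1 ≤ i ∧ i ≤ n ∧ 0 < α i ∧ β = downAt i α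

/-- `β` is obtained from `α` by one admissible increasing move. -/
def UpStep (n : ℕ) (α β : ℕ → ℕ) : Prop :=
  ∃ i, i < n ∧ 0 < α i ∧ β = upAt i α

/-- Borel partial order: `geB n α β` means `x^α ≥_B x^β`, i.e. `β` is reachable
from `α` by a finite sequence of decreasing moves. -/
def geB (n : ℕ) (α β : ℕ → ℕ) : Prop :=
  Relation.ReflTransGen (DownStep n) α β

/-- `Mon n r` : (exponents of) monomials of degree `r` in `x_0,…,x_n`, i.e. `𝒫(n,r)`. -/
def Mon (n r : ℕ) : Set (ℕ → ℕ) :=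
  {α | (∀ k, n < k → α k = 0) ∧ ∑ i ∈ Finset.range (n + 1), α i = r}

/-- A Borel set in `𝒫(n,r)`: closed under admissible increasing moves. -/
def IsBorelSet (n r : ℕ) (B : Set (ℕ → ℕ)) : Prop :=
  B ⊆ Mon n r ∧ ∀ α ∈ B, ∀ β, UpStep n α β → β ∈ B

/-- `σ(j) = ∑_{i=j}^n α_i`. -/
def sumFrom (n j : ℕ) (α : ℕ → ℕ) : ℕ := ∑ i ∈ Finset.Icc j n, α i

/-- Multiplication by the variable `x_i`. -/
def addVar (i : ℕ) (α : ℕ → ℕ) : ℕ → ℕ := fun k => if k = i then α k + 1 else α k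

/-- Division by the variable `x_i`. -/
def subVar (i : ℕ) (α : ℕ → ℕ) : ℕ → ℕ := fun k => if k = i then α k - 1 else α k

/-- The result of applying the composition of decreasing moves `(e⁻_l)^{μ l}` (over all `l`). -/
def applyMoves (μ α : ℕ → ℕ) : ℕ → ℕ := fun k => α k + μ (k + 1) - μ k

/-- The composition of decreasing moves encoded by `μ` is admissible on `α`. -/
def AdmissibleOn (μ α : ℕ → ℕ) : Prop := ∀ k, μ k ≤ α k + μ (k + 1)

/-- `𝔉_α` : admissible compositions of decreasing moves with indices in `[1,j]`
sending `α` inside `B` (contains the identity `μ = 0` as soon as `α ∈ B`). -/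
def MovesFam (j : ℕ) (α : ℕ → ℕ) (B : Set (ℕ → ℕ)) : Set (ℕ → ℕ) :=
  {μ | (∀ l, μ l ≠ 0 → 1 ≤ l ∧ l ≤ j) ∧ AdmissibleOn μ α ∧ applyMoves μ α ∈ B}

/-- `min x^γ` : least index of a variable dividing `x^γ`. -/
noncomputable def minIdx (γ : ℕ → ℕ) : ℕ := sInf {k | γ k ≠ 0}

/-- `x^α >_DegLex x^β` for monomials of the same degree (`x_n ≻ ⋯ ≻ x_0`). -/
def degLexGT (α β : ℕ → ℕ) : Prop :=
  ∃ j, β j < α j ∧ ∀ k, j < k → α k = β k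

/-- `x^α >_RevLex x^β` for monomials of the same degree (`x_n ≻ ⋯ ≻ x_0`). -/
def revLexGT (α β : ℕ → ℕ) : Prop :=
  ∃ j, α j < β j ∧ ∀ k, k < j → α k = β k

/-- The monomial `x_1^k x_0^{d-k}`. -/
def pure01 (d k : ℕ) : ℕ → ℕ :=
  fun m => if m = 1 then k else if m = 0 then d - k else 0

/-- For a Borel set `B` of degree-`d` monomials (points case), the regularity of the
saturation of `⟨B⟩` is the least `s` with `x_1^s x_0^{d-s} ∈ B`. -/
noncomputable def regSat (d : ℕ) (B : Set (ℕ → ℕ)) : ℕ := sInf {s | pure01 d s ∈ B}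

/-- Degree-`d` part of the lexsegment ideal `L = (x_n,…,x_2,x_1^d)`. -/
def lexSegPts (n d : ℕ) : Set (ℕ → ℕ) :=
  {α ∈ Mon n d | (∃ i, 2 ≤ i ∧ i ≤ n ∧ 0 < α i) ∨ d ≤ α 1}

/-- A monomial ideal in `K[x_0,…,x_n]`, given by its set of (exponents of) monomials. -/
def IsMonomialIdeal (n : ℕ) (S : Set (ℕ → ℕ)) : Prop :=
  (∀ α ∈ S, ∀ k, n < k → α k = 0) ∧ ∀ α ∈ S, ∀ k, k ≤ n → addVar k α ∈ S

/-- Strongly stable (Borel-fixed in characteristic 0): `x^α ∈ I`, `x_i ∣ x^α`, `i < j ≤ n`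
implies `x_j x^α / x_i ∈ I`. -/
def StronglyStable (n : ℕ) (S : Set (ℕ → ℕ)) : Prop :=
  ∀ α ∈ S, ∀ i j, i < j → j ≤ n → 0 < α i →
    (fun k => if k = i then α i - 1 else if k = j then α j + 1 else α k) ∈ S

/-- `x^α` is a minimal generator of the monomial ideal `S`. -/
def MinGen (n : ℕ) (S : Set (ℕ → ℕ)) (α : ℕ → ℕ) : Prop :=
  α ∈ S ∧ ∀ k, k ≤ n → 0 < α k → subVar k α ∉ S

/-- One DegLex-rational deformation step for points: remove the minimal monomial
x_1^{reg} x_0^{d-reg} and insert the DegLex-greatest monomial of the complement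
involving a variable of index ≥ 2. -/
def DefStep (n d : ℕ) (B B' : Set (ℕ → ℕ)) : Prop :=
  ∃ β ∈ Mon n d, β ∉ B ∧ (∃ i, 2 ≤ i ∧ i ≤ n ∧ 0 < β i) ∧
    (∀ γ ∈ Mon n d, γ ∉ B → (∃ i, 2 ≤ i ∧ i ≤ n ∧ 0 < γ i) → γ = β ∨ degLexGT β γ) ∧
    B' = insert β (B \ {pure01 d (regSat d B)})

section Aux

variable {n d : ℕ}

lemma mon_apply_le {α : ℕ → ℕ} (h : α ∈ Mon n d) (i : ℕ) : α i ≤ d := by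
  rcases h with ⟨h0, hs⟩
  rcases le_or_gt i n with hi | hi
  · calc α i ≤ ∑ j ∈ Finset.range (n+1), α j :=
        Finset.single_le_sum (fun j _ => Nat.zero_le _) (Finset.mem_range.2 (by omega))
      _ = d := hs
  · simp [h0 i hi]

lemma mon_finite : (Mon n d).Finite := by
  have hsub : Mon n d ⊆ (fun g : Fin (n+1) → Fin (d+1) =>
      fun k => if h : k < n + 1 then (g ⟨k, h⟩ : ℕ) else 0) '' Set.univ := by
    intro α hα
    refine ⟨fun i => ⟨α i, Nat.lt_succ_of_le (mon_apply_le hα i)⟩, trivial, ?_⟩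
    funext k
    by_cases h : k < n + 1
    · simp [h]
    · simp [h, hα.1 k (by omega)]
  exact Set.Finite.subset ((Set.finite_univ).image _) hsub

lemma pure01_one (d k : ℕ) : pure01 d k 1 = k := by simp [pure01]

lemma pure01_zero (d k : ℕ) : pure01 d k 0 = d - k := by simp [pure01]

lemma pure01_hi (d k m : ℕ) (hm : 2 ≤ m) : pure01 d k m = 0 := by
  simp only [pure01]
  rw [if_neg (by omega), if_neg (by omega)]

lemma pure01_inj {d k k' : ℕ} (h : pure01 d k = pure01 d k') : k = k' := by
  have := congrFun h 1; simpa [pure01] using this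

lemma pure01_mem_mon (hn : 1 ≤ n) {k : ℕ} (hk : k ≤ d) : pure01 d k ∈ Mon n d := by
  constructor
  · intro m hm; exact pure01_hi d k m (by omega)
  · have hsub : Finset.range 2 ⊆ Finset.range (n+1) := by
      intro x hx; simp only [Finset.mem_range] at hx ⊢; omega
    rw [← Finset.sum_subset hsub
      (fun x _ hx2 => pure01_hi d k x (by simp only [Finset.mem_range] at hx2; omega))]
    simp [Finset.sum_range_succ, pure01]
    omega

lemma mon_pure01_eq (hn : 1 ≤ n) {α : ℕ → ℕ} (hα : α ∈ Mon n d) (h2 : ∀ i, 2 ≤ i → α i = 0) :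
    α = pure01 d (α 1) := by
  have h1 : α 1 ≤ d := mon_apply_le hα 1
  have h0 : α 0 = d - α 1 := by
    have hs := hα.2
    have hsub : Finset.range 2 ⊆ Finset.range (n+1) := by
      intro x hx; simp only [Finset.mem_range] at hx ⊢; omega
    have hvan : ∀ x ∈ Finset.range (n+1), x ∉ Finset.range 2 → α x = 0 := by
      intro x _ hx2
      simp only [Finset.mem_range] at hx2
      exact h2 x (by omega)
    rw [← Finset.sum_subset hsub hvan] at hs
    simp [Finset.sum_range_succ] at hs; omega
  funext m
  match m with
  | 0 => simpa [pure01] using h0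
  | 1 => simp [pure01]
  | (m+2) => rw [h2 (m+2) (by omega), pure01_hi _ _ _ (by omega)]

lemma upAt_mem_mon {α : ℕ → ℕ} (hα : α ∈ Mon n d) {i : ℕ} (hi : i < n) (hpos : 0 < α i) :
    upAt i α ∈ Mon n d := by
  constructor
  · intro k hk
    have h1 : k ≠ i := by omega
    have h2 : k ≠ i + 1 := by omega
    simp [upAt, h1, h2, hα.1 k hk]
  · have key : ∀ k, upAt i α k + (if k = i then 1 else 0)
        = α k + (if k = i + 1 then 1 else 0) := by
      intro k
      simp only [upAt]
      by_cases h1 : k = i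
      · rw [h1, if_pos rfl, if_pos rfl, if_neg (by omega : ¬ i = i + 1)]
        omega
      · by_cases h2 : k = i + 1
        · rw [h2, if_neg (by omega : ¬ i + 1 = i), if_pos rfl,
            if_neg (by omega : ¬ i + 1 = i), if_pos rfl]
        · rw [if_neg h1, if_neg h2, if_neg h1, if_neg h2]
    have hsum := Finset.sum_congr rfl (fun k (_ : k ∈ Finset.range (n+1)) => key k)
    rw [Finset.sum_add_distrib, Finset.sum_add_distrib,
      Finset.sum_ite_eq' (Finset.range (n+1)) i (fun _ => 1),
      Finset.sum_ite_eq' (Finset.range (n+1)) (i+1) (fun _ => 1),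
      if_pos (Finset.mem_range.2 (by omega)), if_pos (Finset.mem_range.2 (by omega))] at hsum
    have := Nat.add_right_cancel hsum
    rw [this]; exact hα.2

lemma degLex_asymm {α β : ℕ → ℕ} (h1 : degLexGT α β) (h2 : degLexGT β α) : False := by
  obtain ⟨j1, hj1, ha1⟩ := h1
  obtain ⟨j2, hj2, ha2⟩ := h2
  rcases lt_trichotomy j1 j2 with h | h | h
  · have := ha1 j2 h; omega
  · subst h; omega
  · have := ha2 j1 h; omega

lemma degLex_trichotomy {α β : ℕ → ℕ} (hα : α ∈ Mon n d) (hβ : β ∈ Mon n d) :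
    α = β ∨ degLexGT α β ∨ degLexGT β α := by
  by_cases h : α = β
  · left; exact h
  right
  have hne : ∃ k, α k ≠ β k := by
    by_contra hc; push_neg at hc; exact h (funext hc)
  have hbd : ∀ k, α k ≠ β k → k ≤ n := by
    intro k hk
    by_contra hkn
    rw [hα.1 k (by omega), hβ.1 k (by omega)] at hk; exact hk rfl
  set T := (Finset.range (n+1)).filter (fun k => α k ≠ β k) with hT
  have hTne : T.Nonempty := by
    obtain ⟨k, hk⟩ := hne
    exact ⟨k, Finset.mem_filter.2 ⟨Finset.mem_range.2 (by have := hbd k hk; omega), hk⟩⟩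
  have hjT : T.max' hTne ∈ T := T.max'_mem hTne
  set j := T.max' hTne
  have hjd : α j ≠ β j := by
    have := Finset.mem_filter.1 hjT
    simpa using this.2
  have hgt : ∀ k, j < k → α k = β k := by
    intro k hk
    by_contra hc
    have hkT : k ∈ T := Finset.mem_filter.2 ⟨Finset.mem_range.2 (by have := hbd k hc; omega), hc⟩
    have := Finset.le_max' T k hkT
    omega
  rcases Nat.lt_or_ge (α j) (β j) with hlt | hge
  · right; exact ⟨j, hlt, fun k hk => (hgt k hk).symm⟩
  · left; exact ⟨j, by omega, hgt⟩

def encodeFn (n d : ℕ) (α : ℕ → ℕ) : ℕ := ∑ i ∈ Finset.range (n+1), α i * (d+1)^i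

lemma geom_aux (d : ℕ) : ∀ j, (∑ i ∈ Finset.range j, d * (d+1)^i) + 1 = (d+1)^j := by
  intro j
  induction j with
  | zero => simp
  | succ j ih =>
    rw [Finset.sum_range_succ, pow_succ]
    have : (d+1)^j * (d+1) = (d+1)^j + d * (d+1)^j := by ring
    omega

lemma encode_lt {α β : ℕ → ℕ} (hα : α ∈ Mon n d) (hβ : β ∈ Mon n d)
    (h : degLexGT α β) : encodeFn n d β < encodeFn n d α := by
  obtain ⟨j, hj, hagree⟩ := h
  have hjn : j ≤ n := by
    by_contra hc
    rw [hα.1 j (by omega), hβ.1 j (by omega)] at hj; omega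
  have split : ∀ γ : ℕ → ℕ, encodeFn n d γ =
      (∑ i ∈ Finset.range j, γ i * (d+1)^i) + (γ j * (d+1)^j
        + ∑ i ∈ Finset.Ico (j+1) (n+1), γ i * (d+1)^i) := by
    intro γ
    rw [encodeFn, Finset.range_eq_Ico,
      ← Finset.sum_Ico_consecutive _ (Nat.zero_le j) (by omega : j ≤ n+1),
      Finset.sum_eq_sum_Ico_succ_bot (by omega : j < n+1), ← Finset.range_eq_Ico]
  have hT : ∑ i ∈ Finset.Ico (j+1) (n+1), α i * (d+1)^i
      = ∑ i ∈ Finset.Ico (j+1) (n+1), β i * (d+1)^i := by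
    refine Finset.sum_congr rfl (fun k hk => ?_)
    rw [hagree k (by simp only [Finset.mem_Ico] at hk; omega)]
  have hHβ : (∑ i ∈ Finset.range j, β i * (d+1)^i) < (d+1)^j := by
    have hle : (∑ i ∈ Finset.range j, β i * (d+1)^i) ≤ ∑ i ∈ Finset.range j, d * (d+1)^i :=
      Finset.sum_le_sum (fun i _ => Nat.mul_le_mul_right _ (mon_apply_le hβ i))
    have := geom_aux d j
    omega
  have hstep : β j * (d+1)^j + (d+1)^j ≤ α j * (d+1)^j := by
    have h1 : (β j + 1) * (d+1)^j ≤ α j * (d+1)^j := Nat.mul_le_mul_right _ (by omega)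
    rw [add_mul, one_mul] at h1
    exact h1
  rw [split α, split β, hT]
  have hHα : 0 ≤ ∑ i ∈ Finset.range j, α i * (d+1)^i := Nat.zero_le _
  omega

lemma exists_degLex_max {C : Set (ℕ → ℕ)} (hC : C ⊆ Mon n d) (hfin : C.Finite)
    (hne : C.Nonempty) : ∃ β ∈ C, ∀ γ ∈ C, γ = β ∨ degLexGT β γ := by
  obtain ⟨β, hβC, hmax⟩ := Set.exists_max_image C (encodeFn n d) hfin hne
  refine ⟨β, hβC, fun γ hγ => ?_⟩
  rcases degLex_trichotomy (hC hγ) (hC hβC) with h | h | h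
  · left; exact h
  · exfalso
    have := encode_lt (hC hγ) (hC hβC) h
    have := hmax γ hγ
    omega
  · right; exact h

lemma upAt0_pure01 {k : ℕ} (_hk : k < d) : upAt 0 (pure01 d k) = pure01 d (k+1) := by
  funext m
  match m with
  | 0 =>
    show pure01 d k 0 - 1 = pure01 d (k+1) 0
    simp [pure01]; omega
  | 1 =>
    show pure01 d k 1 + 1 = pure01 d (k+1) 1
    simp [pure01]
  | (m+2) =>
    show pure01 d k (m+2) = pure01 d (k+1) (m+2)
    simp [pure01]


lemma pure01_mem_of_ge {B : Set (ℕ → ℕ)} (hn : 1 ≤ n) (hB : IsBorelSet n d B) {s k : ℕ}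
    (hs : pure01 d s ∈ B) (hsk : s ≤ k) (hk : k ≤ d) : pure01 d k ∈ B := by
  induction k with
  | zero =>
    have h0 : s = 0 := by omega
    rw [← h0]; exact hs
  | succ k ih =>
    rcases Nat.lt_or_ge s (k+1) with h | h
    · have hkB : pure01 d k ∈ B := ih (by omega) (by omega)
      refine hB.2 _ hkB _ ⟨0, by omega, ?_, (upAt0_pure01 (by omega)).symm⟩
      show 0 < pure01 d k 0
      simp [pure01]; omega
    · have h1 : s = k + 1 := by omega
      rw [← h1]; exact hs

lemma pure01_top_mem {B : Set (ℕ → ℕ)} (hn : 1 ≤ n) (hB : IsBorelSet n d B)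
    (hN : (Mon n d \ B).ncard = d) : pure01 d d ∈ B := by
  by_contra h
  have hsubset : pure01 d '' (Set.Iio (d+1)) ⊆ Mon n d \ B := by
    rintro γ ⟨k, hk, rfl⟩
    simp only [Set.mem_Iio] at hk
    refine ⟨pure01_mem_mon hn (by omega), fun hkB => h ?_⟩
    exact pure01_mem_of_ge hn hB hkB (by omega) le_rfl
  have hfin : (Mon n d \ B).Finite := mon_finite.subset Set.diff_subset
  have hcard : (pure01 d '' Set.Iio (d+1)).ncard = d + 1 := by
    rw [Set.ncard_image_of_injective _ (fun a b hab => pure01_inj hab),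
      ← Finset.coe_range, Set.ncard_coe_finset, Finset.card_range]
  have hle := Set.ncard_le_ncard hsubset hfin
  omega

lemma regSat_le {B : Set (ℕ → ℕ)} (hn : 1 ≤ n) (hB : IsBorelSet n d B)
    (hN : (Mon n d \ B).ncard = d) : regSat d B ≤ d :=
  Nat.sInf_le (pure01_top_mem hn hB hN)

lemma regSat_mem {B : Set (ℕ → ℕ)} (hn : 1 ≤ n) (hB : IsBorelSet n d B)
    (hN : (Mon n d \ B).ncard = d) : pure01 d (regSat d B) ∈ B := by
  have h := Nat.sInf_mem (⟨d, pure01_top_mem hn hB hN⟩ : {s | pure01 d s ∈ B}.Nonempty)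
  exact h

lemma pure01_not_mem_lt {B : Set (ℕ → ℕ)} {k : ℕ} (hk : k < regSat d B) :
    pure01 d k ∉ B := by
  intro h
  have h2 : regSat d B ≤ k := Nat.sInf_le (show k ∈ {s | pure01 d s ∈ B} from h)
  omega

def Cpts (n d : ℕ) (B : Set (ℕ → ℕ)) : Set (ℕ → ℕ) :=
  {γ | γ ∈ Mon n d ∧ γ ∉ B ∧ ∃ i, 2 ≤ i ∧ i ≤ n ∧ 0 < γ i}

lemma compl_decomp {B : Set (ℕ → ℕ)} (hn : 1 ≤ n) (hB : IsBorelSet n d B)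
    (hN : (Mon n d \ B).ncard = d) :
    Mon n d \ B = pure01 d '' (Set.Iio (regSat d B)) ∪ Cpts n d B := by
  have hsmem := regSat_mem hn hB hN
  have hsle := regSat_le hn hB hN
  ext γ
  constructor
  · rintro ⟨hγM, hγB⟩
    by_cases h2 : ∃ i, 2 ≤ i ∧ i ≤ n ∧ 0 < γ i
    · right; exact ⟨hγM, hγB, h2⟩
    · left
      push_neg at h2
      have hz : ∀ i, 2 ≤ i → γ i = 0 := by
        intro i hi
        rcases le_or_gt i n with h | h
        · have := h2 i hi h; omega
        · exact hγM.1 i h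
      refine ⟨γ 1, ?_, (mon_pure01_eq hn hγM hz).symm⟩
      simp only [Set.mem_Iio]
      by_contra hge
      push_neg at hge
      have hmem : pure01 d (γ 1) ∈ B :=
        pure01_mem_of_ge hn hB hsmem hge (mon_apply_le hγM 1)
      rw [← mon_pure01_eq hn hγM hz] at hmem
      exact hγB hmem
  · rintro (⟨k, hk, rfl⟩ | hC)
    · simp only [Set.mem_Iio] at hk
      exact ⟨pure01_mem_mon hn (by omega), pure01_not_mem_lt hk⟩
    · exact ⟨hC.1, hC.2.1⟩

lemma cpts_ncard {B : Set (ℕ → ℕ)} (hn : 1 ≤ n) (hB : IsBorelSet n d B)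
    (hN : (Mon n d \ B).ncard = d) : (Cpts n d B).ncard = d - regSat d B := by
  have hdecomp := compl_decomp hn hB hN
  have hfinN : (Mon n d \ B).Finite := mon_finite.subset Set.diff_subset
  have hfinC : (Cpts n d B).Finite :=
    hfinN.subset (by rw [hdecomp]; exact Set.subset_union_right)
  have hfinP : (pure01 d '' Set.Iio (regSat d B)).Finite :=
    hfinN.subset (by rw [hdecomp]; exact Set.subset_union_left)
  have hdisj : Disjoint (pure01 d '' Set.Iio (regSat d B)) (Cpts n d B) := by
    rw [Set.disjoint_left]
    rintro γ ⟨k, hk, rfl⟩ hC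
    obtain ⟨i, hi2, hin, hipos⟩ := hC.2.2
    rw [pure01_hi d k i hi2] at hipos
    exact absurd hipos (by omega)
  have hcardP : (pure01 d '' Set.Iio (regSat d B)).ncard = regSat d B := by
    rw [Set.ncard_image_of_injective _ (fun a b hab => pure01_inj hab),
      ← Finset.coe_range, Set.ncard_coe_finset, Finset.card_range]
  have hu := Set.ncard_union_eq hdisj hfinP hfinC
  have hsle := regSat_le hn hB hN
  rw [hdecomp] at hN
  rw [hN, hcardP] at hu
  omega

lemma cpts_sub : Cpts n d B ⊆ Mon n d := fun γ hγ => hγ.1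

noncomputable def dlMaxC (n d : ℕ) (B : Set (ℕ → ℕ)) : ℕ → ℕ :=
  open Classical in
  if h : ∃ β ∈ Cpts n d B, ∀ γ ∈ Cpts n d B, γ = β ∨ degLexGT β γ then h.choose else 0

noncomputable def nextSet (n d : ℕ) (B : Set (ℕ → ℕ)) : Set (ℕ → ℕ) :=
  insert (dlMaxC n d B) (B \ {pure01 d (regSat d B)})

lemma dlMaxC_spec {B : Set (ℕ → ℕ)} (hn : 1 ≤ n) (hB : IsBorelSet n d B)
    (hN : (Mon n d \ B).ncard = d) (hlt : regSat d B < d) :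
    dlMaxC n d B ∈ Cpts n d B ∧
      ∀ γ ∈ Cpts n d B, γ = dlMaxC n d B ∨ degLexGT (dlMaxC n d B) γ := by
  have hCsub : Cpts n d B ⊆ Mon n d := cpts_sub
  have hfin : (Cpts n d B).Finite := mon_finite.subset hCsub
  have hne : (Cpts n d B).Nonempty := by
    rw [Set.nonempty_iff_ne_empty]
    intro h
    have hc := cpts_ncard hn hB hN
    rw [h, Set.ncard_empty] at hc
    omega
  have hex : ∃ β ∈ Cpts n d B, ∀ γ ∈ Cpts n d B, γ = β ∨ degLexGT β γ :=
    exists_degLex_max hCsub hfin hne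
  unfold dlMaxC
  rw [dif_pos hex]
  exact ⟨hex.choose_spec.1, hex.choose_spec.2⟩

lemma step_all {B : Set (ℕ → ℕ)} (hn : 1 ≤ n) (hB : IsBorelSet n d B)
    (hN : (Mon n d \ B).ncard = d) (hlt : regSat d B < d) :
    DefStep n d B (nextSet n d B) ∧ IsBorelSet n d (nextSet n d B) ∧
      (Mon n d \ nextSet n d B).ncard = d ∧
      regSat d (nextSet n d B) = regSat d B + 1 := by
  obtain ⟨hβC, hβmax⟩ := dlMaxC_spec hn hB hN hlt
  set β := dlMaxC n d B with hβdef
  set s := regSat d B with hsdef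
  obtain ⟨hβM, hβB, hβ2⟩ := hβC
  have hsmem : pure01 d s ∈ B := regSat_mem hn hB hN
  have hsle : s ≤ d := regSat_le hn hB hN
  have hpβ : pure01 d s ≠ β := by
    intro h
    obtain ⟨i, hi2, hin, hipos⟩ := hβ2
    rw [← h, pure01_hi d s i hi2] at hipos
    omega
  have hdef : DefStep n d B (nextSet n d B) := by
    refine ⟨β, hβM, hβB, hβ2, ?_, rfl⟩
    intro γ hγM hγB hγ2
    exact hβmax γ ⟨hγM, hγB, hγ2⟩
  have hB' : IsBorelSet n d (nextSet n d B) := by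
    constructor
    · rintro α (rfl | ⟨hαB, -⟩)
      · exact hβM
      · exact hB.1 hαB
    · rintro α hα γ ⟨i, hin, hipos, rfl⟩
      rcases Set.mem_insert_iff.1 hα with rfl | ⟨hαB, hαne⟩
      · -- β = β
        have hγM : upAt i β ∈ Mon n d := upAt_mem_mon hβM hin hipos
        have hγ2 : ∃ j, 2 ≤ j ∧ j ≤ n ∧ 0 < upAt i β j := by
          rcases Nat.lt_or_ge i 1 with hi0 | hi1
          · obtain ⟨j, hj2, hjn, hjpos⟩ := hβ2
            refine ⟨j, hj2, hjn, ?_⟩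
            have h1 : j ≠ i := by omega
            have h2 : j ≠ i + 1 := by omega
            simpa [upAt, h1, h2] using hjpos
          · refine ⟨i+1, by omega, by omega, ?_⟩
            show 0 < upAt i β (i+1)
            simp [upAt, (by omega : ¬ i + 1 = i)]
        by_cases hγB : upAt i β ∈ B
        · refine Set.mem_insert_iff.2 (Or.inr ⟨hγB, ?_⟩)
          intro hmem
          have heq : upAt i β = pure01 d s := hmem
          obtain ⟨j, hj2, hjn, hjpos⟩ := hγ2
          rw [heq, pure01_hi d s j hj2] at hjpos
          omega
        · exfalso
          have hγC : upAt i β ∈ Cpts n d B := ⟨hγM, hγB, hγ2⟩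
          have hgt : degLexGT (upAt i β) β := by
            refine ⟨i+1, ?_, ?_⟩
            · show β (i+1) < upAt i β (i+1)
              simp [upAt, (by omega : ¬ i + 1 = i)]
            · intro k hk
              have h1 : k ≠ i := by omega
              have h2 : k ≠ i + 1 := by omega
              simp [upAt, h1, h2]
          rcases hβmax _ hγC with heq | hgt'
          · rw [heq] at hgt
            exact degLex_asymm hgt hgt
          · exact degLex_asymm hgt hgt'
      · -- α ∈ B \ {pure01 d s}
        have hγB : upAt i α ∈ B := hB.2 α hαB _ ⟨i, hin, hipos, rfl⟩
        refine Set.mem_insert_iff.2 (Or.inr ⟨hγB, ?_⟩)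
        intro hmem
        have heq : upAt i α = pure01 d s := hmem
        have hi0 : i = 0 := by
          by_contra hi0
          have hcf : upAt i α (i+1) = pure01 d s (i+1) := congrFun heq (i+1)
          rw [pure01_hi d s (i+1) (by omega)] at hcf
          simp [upAt, (by omega : ¬ i + 1 = i)] at hcf
        subst hi0
        have h1 : α 1 + 1 = s := by
          have hcf := congrFun heq 1
          simpa [upAt, pure01] using hcf
        have hαM : α ∈ Mon n d := hB.1 hαB
        have hz : ∀ j, 2 ≤ j → α j = 0 := by
          intro j hj
          have hcf := congrFun heq j
          have hj1 : j ≠ 0 := by omega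
          have hj2 : j ≠ 0 + 1 := by omega
          rw [pure01_hi d s j hj] at hcf
          simpa [upAt, hj1, hj2] using hcf
        have hαeq : α = pure01 d (α 1) := mon_pure01_eq hn hαM hz
        refine pure01_not_mem_lt (show α 1 < regSat d B by omega) ?_
        rw [← hαeq]; exact hαB
  have hNeq : Mon n d \ nextSet n d B = insert (pure01 d s) ((Mon n d \ B) \ {β}) := by
    ext γ
    simp only [nextSet, Set.mem_diff, Set.mem_insert_iff, Set.mem_singleton_iff, ← hsdef,
      ← hβdef]
    constructor
    · rintro ⟨hγM, hγn⟩
      push_neg at hγn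
      obtain ⟨hγβ, hγ2⟩ := hγn
      by_cases h : γ = pure01 d s
      · exact Or.inl h
      · exact Or.inr ⟨⟨hγM, fun hγB => h (hγ2 hγB)⟩, hγβ⟩
    · rintro (rfl | ⟨⟨hγM, hγB⟩, hγβ⟩)
      · refine ⟨pure01_mem_mon hn hsle, ?_⟩
        rintro (h | ⟨-, hne⟩)
        · exact hpβ h
        · exact hne rfl
      · refine ⟨hγM, ?_⟩
        rintro (h | ⟨hB', -⟩)
        · exact hγβ h
        · exact hγB hB'
  have hNfin : (Mon n d \ B).Finite := mon_finite.subset Set.diff_subset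
  have hβN : β ∈ Mon n d \ B := ⟨hβM, hβB⟩
  have hpnotin : pure01 d s ∉ (Mon n d \ B) \ {β} := fun h => h.1.2 hsmem
  have hcount : (Mon n d \ nextSet n d B).ncard = d := by
    rw [hNeq, Set.ncard_insert_of_notMem hpnotin (hNfin.subset Set.diff_subset),
      Set.ncard_diff_singleton_of_mem hβN, hN]
    omega
  have hreg : regSat d (nextSet n d B) = s + 1 := by
    have hmem1 : pure01 d (s+1) ∈ nextSet n d B := by
      refine Set.mem_insert_iff.2 (Or.inr ⟨pure01_mem_of_ge hn hB hsmem (by omega) (by omega), ?_⟩)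
      intro h
      have := pure01_inj (Set.mem_singleton_iff.1 h)
      omega
    have hnot : ∀ k, k ≤ s → pure01 d k ∉ nextSet n d B := by
      intro k hk hmem
      rcases Set.mem_insert_iff.1 hmem with h | ⟨hkB, hkne⟩
      · rw [← hβdef] at h
        obtain ⟨i, hi2, hin, hipos⟩ := hβ2
        rw [← h, pure01_hi d k i hi2] at hipos
        omega
      · rcases Nat.lt_or_ge k s with hks | hks
        · exact pure01_not_mem_lt hks hkB
        · have hkeq : k = s := by omega
          exact hkne (Set.mem_singleton_iff.2 (by rw [hkeq]))
    have hub : regSat d (nextSet n d B) ≤ s + 1 :=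
      Nat.sInf_le (show s + 1 ∈ {t | pure01 d t ∈ nextSet n d B} from hmem1)
    have hlb : ¬ regSat d (nextSet n d B) ≤ s := by
      intro hle'
      have hmem := Nat.sInf_mem
        (⟨s+1, hmem1⟩ : {t | pure01 d t ∈ nextSet n d B}.Nonempty)
      exact hnot _ hle' hmem
    omega
  exact ⟨hdef, hB', hcount, hreg⟩

lemma final_eq {B : Set (ℕ → ℕ)} (hn : 1 ≤ n) (hB : IsBorelSet n d B)
    (hN : (Mon n d \ B).ncard = d) (hreg : regSat d B = d) : B = lexSegPts n d := by
  have hdecomp := compl_decomp hn hB hN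
  have hC : Cpts n d B = ∅ := by
    have hfin : (Cpts n d B).Finite := mon_finite.subset cpts_sub
    have hc := cpts_ncard hn hB hN
    rw [hreg, Nat.sub_self] at hc
    exact (Set.ncard_eq_zero hfin).1 hc
  rw [hC, Set.union_empty, hreg] at hdecomp
  have hBM : B = Mon n d \ (Mon n d \ B) := (Set.diff_diff_cancel_left hB.1).symm
  rw [hBM, hdecomp]
  ext γ
  simp only [lexSegPts, Set.mem_diff, Set.mem_setOf_eq, Set.mem_image, Set.mem_Iio]
  constructor
  · rintro ⟨hγM, hγn⟩
    refine ⟨hγM, ?_⟩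
    by_cases h2 : ∃ i, 2 ≤ i ∧ i ≤ n ∧ 0 < γ i
    · left; exact h2
    · right
      push_neg at h2
      have hz : ∀ i, 2 ≤ i → γ i = 0 := by
        intro i hi
        rcases le_or_gt i n with h | h
        · have := h2 i hi h; omega
        · exact hγM.1 i h
      by_contra hlt
      push_neg at hlt
      exact hγn ⟨γ 1, hlt, (mon_pure01_eq hn hγM hz).symm⟩
  · rintro ⟨hγM, hor⟩
    refine ⟨hγM, ?_⟩
    rintro ⟨k, hk, rfl⟩
    rcases hor with ⟨i, hi2, hin, hipos⟩ | hd
    · rw [pure01_hi d k i hi2] at hipos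
      omega
    · rw [pure01_one] at hd
      omega

noncomputable def iterSet (n d : ℕ) (B : Set (ℕ → ℕ)) : ℕ → Set (ℕ → ℕ)
  | 0 => B
  | (k+1) => nextSet n d (iterSet n d B k)

end Aux

/-- exactly d − reg consecutive DegLex-rational deformations, each raising
the regularity of the saturation by 1, lead from a Borel ideal of d points to the
lexsegment ideal. -/
theorem stmt_15 (n d : ℕ) (hn : 1 ≤ n) (B : Set (ℕ → ℕ)) (hB : IsBorelSet n d B)
    (hN : (Mon n d \ B).ncard = d) :
    ∃ f : ℕ → Set (ℕ → ℕ), f 0 = B ∧ f (d - regSat d B) = lexSegPts n d ∧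
      (∀ k, k < d - regSat d B → DefStep n d (f k) (f (k + 1))) ∧
      (∀ k, k < d - regSat d B → regSat d (f (k + 1)) = regSat d (f k) + 1) := by
  have hs0le : regSat d B ≤ d := regSat_le hn hB hN
  have hinv : ∀ k, k ≤ d - regSat d B →
      IsBorelSet n d (iterSet n d B k) ∧ (Mon n d \ iterSet n d B k).ncard = d ∧
        regSat d (iterSet n d B k) = regSat d B + k := by
    intro k
    induction k with
    | zero =>
      intro _
      exact ⟨hB, hN, by simp [iterSet]⟩
    | succ k ih =>
      intro hk
      obtain ⟨hB1, hN1, hr1⟩ := ih (by omega)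
      have hlt : regSat d (iterSet n d B k) < d := by omega
      obtain ⟨-, hB2, hN2, hr2⟩ := step_all hn hB1 hN1 hlt
      exact ⟨hB2, hN2, by rw [iterSet, hr2]; omega⟩
  refine ⟨iterSet n d B, rfl, ?_, ?_, ?_⟩
  · obtain ⟨hBk, hNk, hrk⟩ := hinv (d - regSat d B) le_rfl
    exact final_eq hn hBk hNk (by omega)
  · intro k hk
    obtain ⟨hB1, hN1, hr1⟩ := hinv k (by omega)
    have hlt : regSat d (iterSet n d B k) < d := by omega
    exact (step_all hn hB1 hN1 hlt).1
  · intro k hk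
    obtain ⟨hB1, hN1, hr1⟩ := hinv k (by omega)
    have hlt : regSat d (iterSet n d B k) < d := by omega
    exact (step_all hn hB1 hN1 hlt).2.2.2
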